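/- Bregman bounds for the quasi-CES Shmyrev objective: For the function F(b,w,p) = −∑_i (1/ρ_i) ∑_j b_{ij} ln[v_{ij} b_{ij}^{ρ_i−1}] + ∑_j p_j ln p_j + ∑_i [w_i + ((ρ_i−1)/ρ_i)(K_i − w_i)ln(K_i − w_i)], where p_j = ∑_i b_{ij} and w_i = K_i − ∑_j b_{ij}, the Bregman-type remainder d_F(z', z) := F(z') − F(z) − ⟨∇F(z), z'−z⟩ satisfies 0 ≤ d_F(z', z) ≤ ∑_i (1/ρ_i)·KL(b'_i ‖ b_i), for all feasible z = (b,w,p), z' = (b',w',p') with strictly positive b, b'. Hence F is 1-Bregman convex with respect to the divergence ∑_i (1/ρ_i)KL(b'_i‖b_i). -/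

import Mathlib

open Finset

noncomputable def klPt (x y : ℝ) : ℝ := x * Real.log (x / y) - x + y

lemma one_sub_inv_le_log {t : ℝ} (ht : 0 < t) : 1 - 1/t ≤ Real.log t := by
  have h := Real.log_le_sub_one_of_pos (show (0:ℝ) < 1/t by positivity)
  rw [Real.log_div one_ne_zero ht.ne', Real.log_one] at h
  linarith

lemma klPt_nonneg {x y : ℝ} (hx : 0 < x) (hy : 0 < y) : 0 ≤ klPt x y := by
  have h := one_sub_inv_le_log (show (0:ℝ) < x/y by positivity)
  rw [one_div_div] at h
  have h2 := mul_le_mul_of_nonneg_left h hx.le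
  have h3 : x * (1 - y/x) = x - y := by field_simp
  unfold klPt; nlinarith

lemma klPt_sum_le {ι : Type*} (s : Finset ι) (hs : s.Nonempty) (a c : ι → ℝ)
    (ha : ∀ i ∈ s, 0 < a i) (hc : ∀ i ∈ s, 0 < c i) :
    klPt (∑ i ∈ s, a i) (∑ i ∈ s, c i) ≤ ∑ i ∈ s, klPt (a i) (c i) := by
  set A := ∑ i ∈ s, a i with hA
  set C := ∑ i ∈ s, c i with hC
  have hApos : 0 < A := Finset.sum_pos ha hs
  have hCpos : 0 < C := Finset.sum_pos hc hs
  have key : ∀ i ∈ s, a i * Real.log (A/C) - (A/C) * c i + c i ≤ klPt (a i) (c i) := by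
    intro i hi
    have hai := ha i hi
    have hci := hc i hi
    have ht : (0:ℝ) < (a i / c i) / (A / C) := by positivity
    have hlog := one_sub_inv_le_log ht
    rw [Real.log_div (by positivity : (0:ℝ) < a i / c i).ne'
        (by positivity : (0:ℝ) < A / C).ne'] at hlog
    have hmul := mul_le_mul_of_nonneg_left hlog hai.le
    have heq : a i * (1 - 1/((a i / c i)/(A/C))) = a i - A * c i / C := by
      field_simp
    rw [heq, mul_sub] at hmul
    have h4 : (A/C) * c i = A * c i / C := by ring
    unfold klPt
    linarith
  calc klPt A C = ∑ i ∈ s, (a i * Real.log (A/C) - (A/C) * c i + c i) := by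
        rw [Finset.sum_add_distrib, Finset.sum_sub_distrib, ← Finset.sum_mul,
          ← Finset.mul_sum, ← hA, ← hC]
        unfold klPt
        rw [div_mul_cancel₀ _ hCpos.ne']
    _ ≤ ∑ i ∈ s, klPt (a i) (c i) := Finset.sum_le_sum key

/-- Objective of the Shmyrev-type convex program for quasi-CES Fisher markets,
as a function of spendings `b`, with prices `p_j = ∑_i b_{ij}` and leftover
budgets `w_i = K_i − ∑_j b_{ij}`. -/
noncomputable def Fobj (n m : ℕ) (ρ : Fin n → ℝ) (v : Fin n → Fin m → ℝ)
    (K : Fin n → ℝ) (b : Fin n → Fin m → ℝ) : ℝ :=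
  -(∑ i, (1 / ρ i) * ∑ j, b i j * Real.log (v i j * b i j ^ (ρ i - 1)))
    + (∑ j, (∑ i, b i j) * Real.log (∑ i, b i j))
    + ∑ i, ((K i - ∑ j, b i j)
        + ((ρ i - 1) / ρ i) * (∑ j, b i j) * Real.log (∑ j, b i j))

/-- Inner product `⟨∇F(z), z' − z⟩` at `z = (b, w, p)`, `z' = (b', w', p')`, where
`p, w` (resp. `p', w'`) are determined by `b` (resp. `b'`), using the partial
derivatives of `F` in the independent variables `b, p, w`. -/
noncomputable def gradInner (n m : ℕ) (ρ : Fin n → ℝ) (v : Fin n → Fin m → ℝ)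
    (K : Fin n → ℝ) (b b' : Fin n → Fin m → ℝ) : ℝ :=
  (∑ i, ∑ j, (-(1 / ρ i) * (Real.log (v i j * b i j ^ (ρ i - 1)) + (ρ i - 1)))
      * (b' i j - b i j))
    + (∑ j, (Real.log (∑ i, b i j) + 1) * ((∑ i, b' i j) - (∑ i, b i j)))
    + ∑ i, (1 - ((ρ i - 1) / ρ i) * (Real.log (∑ j, b i j) + 1))
        * ((K i - ∑ j, b' i j) - (K i - ∑ j, b i j))

/-- the Bregman remainder of the quasi-CES Shmyrev objective is
nonnegative and bounded above by `∑_i (1/ρ_i) KL(b'_i ‖ b_i)`, i.e. `F` is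
`1`-Bregman convex w.r.t. this divergence. -/
theorem quasiCES_one_Bregman_convex (n m : ℕ) (ρ : Fin n → ℝ)
    (hρ : ∀ i, 0 < ρ i ∧ ρ i ≤ 1)
    (v : Fin n → Fin m → ℝ) (hv : ∀ i j, 0 < v i j)
    (K : Fin n → ℝ) (hK : ∀ i, 0 < K i)
    (b b' : Fin n → Fin m → ℝ)
    (hb : ∀ i j, 0 < b i j) (hb' : ∀ i j, 0 < b' i j)
    (hfeas : ∀ i, ∑ j, b i j ≤ K i) (hfeas' : ∀ i, ∑ j, b' i j ≤ K i) :
    0 ≤ Fobj n m ρ v K b' - Fobj n m ρ v K b - gradInner n m ρ v K b b' ∧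
    Fobj n m ρ v K b' - Fobj n m ρ v K b - gradInner n m ρ v K b b'
      ≤ ∑ i, (1 / ρ i)
          * ∑ j, (b' i j * Real.log (b' i j / b i j) - b' i j + b i j) := by
  rcases Nat.eq_zero_or_pos n with hn | hn
  · subst hn; simp [Fobj, gradInner]
  rcases Nat.eq_zero_or_pos m with hm | hm
  · subst hm; simp [Fobj, gradInner]
  haveI : NeZero n := ⟨hn.ne'⟩
  haveI : NeZero m := ⟨hm.ne'⟩
  have hQ : ∀ i, 0 < ∑ j, b i j := fun i =>
    Finset.sum_pos (fun j _ => hb i j) Finset.univ_nonempty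
  have hQ' : ∀ i, 0 < ∑ j, b' i j := fun i =>
    Finset.sum_pos (fun j _ => hb' i j) Finset.univ_nonempty
  have hP : ∀ j, 0 < ∑ i, b i j := fun j =>
    Finset.sum_pos (fun i _ => hb i j) Finset.univ_nonempty
  have hP' : ∀ j, 0 < ∑ i, b' i j := fun j =>
    Finset.sum_pos (fun i _ => hb' i j) Finset.univ_nonempty
  have hρ0 : ∀ i, ρ i ≠ 0 := fun i => (hρ i).1.ne'
  -- Block A identity
  have sA : (∑ i, (1 / ρ i) * ∑ j, b i j * Real.log (v i j * b i j ^ (ρ i - 1)))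
      - (∑ i, (1 / ρ i) * ∑ j, b' i j * Real.log (v i j * b' i j ^ (ρ i - 1)))
      - (∑ i, ∑ j, (-(1 / ρ i) * (Real.log (v i j * b i j ^ (ρ i - 1)) + (ρ i - 1)))
          * (b' i j - b i j))
      = ∑ i, ((1 - ρ i) / ρ i) * ∑ j, klPt (b' i j) (b i j) := by
    rw [← Finset.sum_sub_distrib, ← Finset.sum_sub_distrib]
    refine Finset.sum_congr rfl (fun i _ => ?_)
    rw [Finset.mul_sum, Finset.mul_sum, Finset.mul_sum, ← Finset.sum_sub_distrib,
      ← Finset.sum_sub_distrib]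
    refine Finset.sum_congr rfl (fun j _ => ?_)
    rw [Real.log_mul (hv i j).ne' (Real.rpow_pos_of_pos (hb i j) _).ne',
      Real.log_mul (hv i j).ne' (Real.rpow_pos_of_pos (hb' i j) _).ne',
      Real.log_rpow (hb i j), Real.log_rpow (hb' i j)]
    unfold klPt
    rw [Real.log_div (hb' i j).ne' (hb i j).ne']
    field_simp
    ring
  -- Block B identity
  have sB : (∑ j, (∑ i, b' i j) * Real.log (∑ i, b' i j))
      - (∑ j, (∑ i, b i j) * Real.log (∑ i, b i j))
      - (∑ j, (Real.log (∑ i, b i j) + 1) * ((∑ i, b' i j) - (∑ i, b i j)))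
      = ∑ j, klPt (∑ i, b' i j) (∑ i, b i j) := by
    rw [← Finset.sum_sub_distrib, ← Finset.sum_sub_distrib]
    refine Finset.sum_congr rfl (fun j _ => ?_)
    unfold klPt
    rw [Real.log_div (hP' j).ne' (hP j).ne']
    ring
  -- Block C identity
  have sC : (∑ i, ((K i - ∑ j, b' i j)
        + ((ρ i - 1) / ρ i) * (∑ j, b' i j) * Real.log (∑ j, b' i j)))
      - (∑ i, ((K i - ∑ j, b i j)
        + ((ρ i - 1) / ρ i) * (∑ j, b i j) * Real.log (∑ j, b i j)))
      - (∑ i, (1 - ((ρ i - 1) / ρ i) * (Real.log (∑ j, b i j) + 1))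
          * ((K i - ∑ j, b' i j) - (K i - ∑ j, b i j)))
      = -∑ i, ((1 - ρ i) / ρ i) * klPt (∑ j, b' i j) (∑ j, b i j) := by
    rw [← Finset.sum_sub_distrib, ← Finset.sum_sub_distrib, ← Finset.sum_neg_distrib]
    refine Finset.sum_congr rfl (fun i _ => ?_)
    unfold klPt
    rw [Real.log_div (hQ' i).ne' (hQ i).ne']
    field_simp
    ring
  have hd : Fobj n m ρ v K b' - Fobj n m ρ v K b - gradInner n m ρ v K b b'
      = (∑ i, ((1 - ρ i) / ρ i) * ∑ j, klPt (b' i j) (b i j))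
        + (∑ j, klPt (∑ i, b' i j) (∑ i, b i j))
        - ∑ i, ((1 - ρ i) / ρ i) * klPt (∑ j, b' i j) (∑ j, b i j) := by
    unfold Fobj gradInner
    linear_combination sA + sB + sC
  have hcoef : ∀ i : Fin n, 0 ≤ (1 - ρ i) / ρ i := fun i =>
    div_nonneg (by linarith [(hρ i).2]) (hρ i).1.le
  have hmerge : ∀ i : Fin n, klPt (∑ j, b' i j) (∑ j, b i j)
      ≤ ∑ j, klPt (b' i j) (b i j) := fun i =>
    klPt_sum_le _ Finset.univ_nonempty _ _ (fun j _ => hb' i j) (fun j _ => hb i j)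
  constructor
  · rw [hd]
    have h1 : ∑ i, ((1 - ρ i) / ρ i) * klPt (∑ j, b' i j) (∑ j, b i j)
        ≤ ∑ i, ((1 - ρ i) / ρ i) * ∑ j, klPt (b' i j) (b i j) :=
      Finset.sum_le_sum (fun i _ => mul_le_mul_of_nonneg_left (hmerge i) (hcoef i))
    have h2 : (0:ℝ) ≤ ∑ j, klPt (∑ i, b' i j) (∑ i, b i j) :=
      Finset.sum_nonneg (fun j _ => klPt_nonneg (hP' j) (hP j))
    linarith
  · rw [hd]
    have h3 : ∑ j, klPt (∑ i, b' i j) (∑ i, b i j)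
        ≤ ∑ j, ∑ i, klPt (b' i j) (b i j) :=
      Finset.sum_le_sum (fun j _ =>
        klPt_sum_le _ Finset.univ_nonempty _ _ (fun i _ => hb' i j) (fun i _ => hb i j))
    have h4 : (0:ℝ) ≤ ∑ i, ((1 - ρ i) / ρ i) * klPt (∑ j, b' i j) (∑ j, b i j) :=
      Finset.sum_nonneg (fun i _ =>
        mul_nonneg (hcoef i) (klPt_nonneg (hQ' i) (hQ i)))
    have h5 : ∑ j, ∑ i, klPt (b' i j) (b i j) = ∑ i, ∑ j, klPt (b' i j) (b i j) :=
      Finset.sum_comm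
    have h6 : ∑ i, (1 / ρ i) * ∑ j, (b' i j * Real.log (b' i j / b i j) - b' i j + b i j)
        = ∑ i, (((1 - ρ i) / ρ i) * ∑ j, klPt (b' i j) (b i j)
            + ∑ j, klPt (b' i j) (b i j)) := by
      refine Finset.sum_congr rfl (fun i _ => ?_)
      have hri := hρ0 i
      have : (1:ℝ) / ρ i = (1 - ρ i) / ρ i + 1 := by field_simp; ring
      rw [this, add_mul, one_mul]
      rfl
    rw [h6, Finset.sum_add_distrib]
    linarith
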